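/- arXiv:2303.13712 — 2 statements merged into one kernel-verified Lean document; each statement's English description precedes it below -/
import Mathlib

section
/- Full control in the LLO model: for every target value m ∈ [0,1] there exists a unique n ∈ [0,1] such that δ·n^γ / (δ·n^γ + (1-n)^γ) = m, where δ > 0 and γ ∈ (0,1]. -/
open Real Set

theorem llo_full_control (δ γ : ℝ) (hδ : 0 < δ) (hγ : γ ∈ Set.Ioc (0:ℝ) 1)
    (m : ℝ) (hm : m ∈ Set.Icc (0:ℝ) 1) :
    ∃! n : ℝ, n ∈ Set.Icc (0:ℝ) 1 ∧
      δ * n ^ γ / (δ * n ^ γ + (1 - n) ^ γ) = m := by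
  obtain ⟨hγ0, hγ1⟩ := hγ
  obtain ⟨hm0, hm1⟩ := hm
  have hden : ∀ n : ℝ, n ∈ Set.Icc (0:ℝ) 1 → 0 < δ * n ^ γ + (1 - n) ^ γ := by
    rintro n ⟨hn0, hn1⟩
    rcases eq_or_lt_of_le hn0 with h | h
    · simp [← h, Real.zero_rpow hγ0.ne']
    · have h1 : 0 < δ * n ^ γ := mul_pos hδ (Real.rpow_pos_of_pos h γ)
      have h2 : 0 ≤ (1 - n) ^ γ := Real.rpow_nonneg (by linarith) γ
      linarith
  have key : ∀ n : ℝ, n ∈ Set.Icc (0:ℝ) 1 →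
      (δ * n ^ γ / (δ * n ^ γ + (1 - n) ^ γ) = m ↔
       δ * (1 - m) * n ^ γ = m * (1 - n) ^ γ) := by
    intro n hn
    rw [div_eq_iff (hden n hn).ne']
    constructor <;> intro h <;> linear_combination h
  rcases eq_or_lt_of_le hm0 with hm0' | hm0'
  · -- m = 0, unique solution n = 0
    refine ⟨0, ⟨⟨le_refl 0, zero_le_one⟩, ?_⟩, ?_⟩
    · rw [key 0 ⟨le_refl 0, zero_le_one⟩, ← hm0']
      simp [Real.zero_rpow hγ0.ne']
    · rintro n ⟨⟨hn0, hn1⟩, heq⟩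
      rw [key n ⟨hn0, hn1⟩, ← hm0'] at heq
      by_contra hne
      have hn0' : 0 < n := lt_of_le_of_ne hn0 (Ne.symm hne)
      have h1 := Real.rpow_pos_of_pos hn0' γ
      nlinarith
  rcases eq_or_lt_of_le hm1 with hm1' | hm1'
  · -- m = 1, unique solution n = 1
    refine ⟨1, ⟨⟨zero_le_one, le_refl 1⟩, ?_⟩, ?_⟩
    · rw [key 1 ⟨zero_le_one, le_refl 1⟩, ← hm1']
      simp [Real.zero_rpow hγ0.ne']
    · rintro n ⟨⟨hn0, hn1⟩, heq⟩
      rw [key n ⟨hn0, hn1⟩, hm1'] at heq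
      by_contra hne
      have hn1' : n < 1 := lt_of_le_of_ne hn1 hne
      have h1 := Real.rpow_pos_of_pos (by linarith : (0:ℝ) < 1 - n) γ
      have h3 : 0 ≤ n ^ γ := Real.rpow_nonneg hn0 γ
      nlinarith
  · -- 0 < m < 1, unique solution n = c/(1+c) with c = (m/(δ(1-m)))^(1/γ)
    have h1m : 0 < 1 - m := by linarith
    set x : ℝ := m / (δ * (1 - m)) with hxdef
    have hx : 0 < x := div_pos hm0' (mul_pos hδ h1m)
    set c : ℝ := x ^ γ⁻¹ with hcdef
    have hc : 0 < c := Real.rpow_pos_of_pos hx _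
    have hcγ : c ^ γ = x := Real.rpow_inv_rpow hx.le hγ0.ne'
    have h1c : 0 < 1 + c := by linarith
    have hn0 : (0:ℝ) < c / (1 + c) := div_pos hc h1c
    have hn1 : c / (1 + c) < 1 := by
      rw [div_lt_one h1c]; linarith
    have hsub : 1 - c / (1 + c) = 1 / (1 + c) := by field_simp; ring
    have hmem : c / (1 + c) ∈ Set.Icc (0:ℝ) 1 := ⟨hn0.le, hn1.le⟩
    have h1cγ : 0 < (1 + c) ^ γ := Real.rpow_pos_of_pos h1c γ
    refine ⟨c / (1 + c), ⟨hmem, ?_⟩, ?_⟩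
    · rw [key _ hmem, hsub, Real.div_rpow hc.le h1c.le,
        Real.div_rpow zero_le_one h1c.le, Real.one_rpow, hcγ, hxdef]
      field_simp
    · rintro n ⟨⟨hn0', hn1'⟩, heq⟩
      rw [key n ⟨hn0', hn1'⟩] at heq
      -- n ≠ 0
      have hnz : 0 < n := by
        rcases eq_or_lt_of_le hn0' with h | h
        · exfalso
          rw [← h] at heq
          simp [Real.zero_rpow hγ0.ne', Real.one_rpow] at heq
          nlinarith
        · exact h
      have hno : n < 1 := by
        rcases eq_or_lt_of_le hn1' with h | h
        · exfalso
          rw [h] at heq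
          simp [Real.zero_rpow hγ0.ne', Real.one_rpow] at heq
          rcases heq with h' | h' <;> linarith
        · exact h
      have hsubn : 0 < 1 - n := by linarith
      have hsγ : 0 < (1 - n) ^ γ := Real.rpow_pos_of_pos hsubn γ
      have h2 : (n / (1 - n)) ^ γ = c ^ γ := by
        rw [Real.div_rpow hnz.le hsubn.le, hcγ, hxdef, div_eq_div_iff hsγ.ne' (mul_pos hδ h1m).ne']
        linear_combination heq
      have h3 : n / (1 - n) = c := by
        have := congrArg (fun t => t ^ γ⁻¹) h2
        simpa [Real.rpow_rpow_inv (div_nonneg hnz.le hsubn.le) hγ0.ne',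
          Real.rpow_rpow_inv hc.le hγ0.ne'] using this
      rw [div_eq_iff hsubn.ne'] at h3
      field_simp
      linarith [h3]
end

section
/- For p ∈ (0,1), δ > 0, the ratio of the partial derivative of w(p) = δ p^γ/(δ p^γ+(1-p)^γ) with respect to γ to its partial derivative with respect to δ equals δ·(log p − log(1−p)), and in particular does not depend on γ. -/
open Real

theorem llo_deriv_ratio (δ γ p : ℝ) (hδ : 0 < δ) (hp : p ∈ Set.Ioo (0:ℝ) 1) :
    deriv (fun c : ℝ => δ * p ^ c / (δ * p ^ c + (1 - p) ^ c)) γ /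
      deriv (fun d : ℝ => d * p ^ γ / (d * p ^ γ + (1 - p) ^ γ)) δ =
    δ * (Real.log p - Real.log (1 - p)) := by
  obtain ⟨hp0, hp1⟩ := hp
  have hq0 : (0:ℝ) < 1 - p := by linarith
  have hpγ : (0:ℝ) < p ^ γ := Real.rpow_pos_of_pos hp0 γ
  have hqγ : (0:ℝ) < (1 - p) ^ γ := Real.rpow_pos_of_pos hq0 γ
  have hden : (0:ℝ) < δ * p ^ γ + (1 - p) ^ γ := by positivity
  have hdne : δ * p ^ γ + (1 - p) ^ γ ≠ 0 := ne_of_gt hden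
  -- derivative in γ
  have h1 : HasDerivAt (fun c : ℝ => p ^ c) (p ^ γ * Real.log p) γ :=
    (Real.hasStrictDerivAt_const_rpow hp0 γ).hasDerivAt
  have h2 : HasDerivAt (fun c : ℝ => (1 - p) ^ c) ((1 - p) ^ γ * Real.log (1 - p)) γ :=
    (Real.hasStrictDerivAt_const_rpow hq0 γ).hasDerivAt
  have hnum : HasDerivAt (fun c : ℝ => δ * p ^ c) (δ * (p ^ γ * Real.log p)) γ :=
    h1.const_mul δ
  have hden' : HasDerivAt (fun c : ℝ => δ * p ^ c + (1 - p) ^ c)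
      (δ * (p ^ γ * Real.log p) + (1 - p) ^ γ * Real.log (1 - p)) γ := hnum.add h2
  have hγ : HasDerivAt (fun c : ℝ => δ * p ^ c / (δ * p ^ c + (1 - p) ^ c))
      ((δ * (p ^ γ * Real.log p) * (δ * p ^ γ + (1 - p) ^ γ) -
        δ * p ^ γ * (δ * (p ^ γ * Real.log p) + (1 - p) ^ γ * Real.log (1 - p))) /
        (δ * p ^ γ + (1 - p) ^ γ) ^ 2) γ := hnum.div hden' hdne
  -- derivative in δ
  have hnum2 : HasDerivAt (fun d : ℝ => d * p ^ γ) (p ^ γ) δ := by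
    simpa using (hasDerivAt_id δ).mul_const (p ^ γ)
  have hden2 : HasDerivAt (fun d : ℝ => d * p ^ γ + (1 - p) ^ γ) (p ^ γ) δ :=
    hnum2.add_const _
  have hδ' : HasDerivAt (fun d : ℝ => d * p ^ γ / (d * p ^ γ + (1 - p) ^ γ))
      ((p ^ γ * (δ * p ^ γ + (1 - p) ^ γ) - δ * p ^ γ * p ^ γ) /
        (δ * p ^ γ + (1 - p) ^ γ) ^ 2) δ := hnum2.div hden2 hdne
  rw [hγ.deriv, hδ'.deriv]
  have e1 : δ * (p ^ γ * Real.log p) * (δ * p ^ γ + (1 - p) ^ γ) -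
        δ * p ^ γ * (δ * (p ^ γ * Real.log p) + (1 - p) ^ γ * Real.log (1 - p)) =
      δ * p ^ γ * (1 - p) ^ γ * (Real.log p - Real.log (1 - p)) := by ring
  have e2 : p ^ γ * (δ * p ^ γ + (1 - p) ^ γ) - δ * p ^ γ * p ^ γ =
      p ^ γ * (1 - p) ^ γ := by ring
  rw [e1, e2]
  field_simp
end
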